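/- arXiv:1503.08378 — 2 statements merged into one kernel-verified Lean document; each statement's English description precedes it below -/
import Mathlib

section
/- Let A₁, A₂, A₃ ∈ GL₂⁺(ℚ) be pairwise non-equivalent matrices. Then there exists a matrix B ∈ GL₂⁺(ℚ) such that among the three numbers nlc(A₁B), nlc(A₂B), nlc(A₃B), one is strictly bigger than the other two. -/
/-- The gcd of two rationals: the non-negative rational `δ` with `aℤ + bℤ = δℤ`. -/
def ratGcd (a b : ℚ) : ℚ :=
  (Int.gcd (a.num * (b.den : ℤ)) (b.num * (a.den : ℤ)) : ℚ) / ((a.den : ℚ) * (b.den : ℚ))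

/-- Two rational matrices are equivalent if `A' = λ B A` for some `B ∈ SL₂(ℤ)`
and non-zero rational `λ`. -/
def MatEquiv (A A' : Matrix (Fin 2) (Fin 2) ℚ) : Prop :=
  ∃ (B : Matrix (Fin 2) (Fin 2) ℤ) (l : ℚ), B.det = 1 ∧ l ≠ 0 ∧
    A' = l • ((B.map (Int.cast : ℤ → ℚ)) * A)

/-- The normalized left content of a matrix `A = [[a,b],[c,d]]`, namely `gcd(a,c)² / det A`. -/
noncomputable def nlc (A : Matrix (Fin 2) (Fin 2) ℚ) : ℚ :=
  (ratGcd (A 0 0) (A 1 0)) ^ 2 / A.det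

lemma mulVec_two {R : Type*} [CommRing R] (C : Matrix (Fin 2) (Fin 2) R) (u : Fin 2 → R)
    (i : Fin 2) : C.mulVec u i = C i 0 * u 0 + C i 1 * u 1 := by
  simp [Matrix.mulVec, dotProduct, Fin.sum_univ_two]

lemma Rat.cast_mul_den (x : ℚ) : (x.num : ℚ) = x * x.den := by
  exact_mod_cast (Rat.mul_den_eq_num x).symm

lemma ratGcd_eq (x y : ℚ) (e j k : ℤ) (he : 0 < e)
    (hj : (j : ℚ) = x * e) (hk : (k : ℚ) = y * e) :
    ratGcd x y = (Int.gcd j k : ℚ) / e := by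
  set a := x.num with ha
  set b := y.num with hb
  have hA : (x.den : ℚ) ≠ 0 := by exact_mod_cast x.den_nz
  have hB : (y.den : ℚ) ≠ 0 := by exact_mod_cast y.den_nz
  have hjA : j * (x.den : ℤ) = a * e := by
    have : (j : ℚ) * (x.den : ℚ) = (a : ℚ) * e := by
      rw [hj, Rat.cast_mul_den x]; ring
    exact_mod_cast this
  have hkB : k * (y.den : ℤ) = b * e := by
    have : (k : ℚ) * (y.den : ℚ) = (b : ℚ) * e := by
      rw [hk, Rat.cast_mul_den y]; ring
    exact_mod_cast this
  have hcopA : IsCoprime a (x.den : ℤ) := by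
    rw [Int.isCoprime_iff_gcd_eq_one]; exact_mod_cast x.reduced
  have hcopB : IsCoprime b (y.den : ℤ) := by
    rw [Int.isCoprime_iff_gcd_eq_one]; exact_mod_cast y.reduced
  have hAe : (x.den : ℤ) ∣ e :=
    (IsCoprime.symm hcopA).dvd_of_dvd_mul_left ⟨j, by linarith [hjA]⟩
  have hBe : (y.den : ℤ) ∣ e :=
    (IsCoprime.symm hcopB).dvd_of_dvd_mul_left ⟨k, by linarith [hkB]⟩
  obtain ⟨s, hs⟩ := hAe
  obtain ⟨t, ht⟩ := hBe
  have hAne : (x.den : ℤ) ≠ 0 := by exact_mod_cast x.den_nz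
  have hBne : (y.den : ℤ) ≠ 0 := by exact_mod_cast y.den_nz
  have hjas : j = a * s :=
    mul_right_cancel₀ hAne (by rw [hjA, hs]; ring)
  have hkbt : k = b * t :=
    mul_right_cancel₀ hBne (by rw [hkB, ht]; ring)
  have key : Int.gcd (a * (y.den:ℤ)) (b * (x.den:ℤ)) * e.natAbs
      = Int.gcd j k * ((x.den:ℤ) * (y.den:ℤ)).natAbs := by
    have h1 : Int.gcd (a * (y.den:ℤ) * e) (b * (x.den:ℤ) * e)
        = Int.gcd (a*(y.den:ℤ)) (b*(x.den:ℤ)) * e.natAbs := Int.gcd_mul_right ..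
    have h2 : Int.gcd (j * ((x.den:ℤ)*(y.den:ℤ))) (k * ((x.den:ℤ)*(y.den:ℤ)))
        = Int.gcd j k * ((x.den:ℤ)*(y.den:ℤ)).natAbs := Int.gcd_mul_right ..
    have e1 : a * (y.den:ℤ) * e = j * ((x.den:ℤ)*(y.den:ℤ)) := by rw [hjas, hs]; ring
    have e2 : b * (x.den:ℤ) * e = k * ((x.den:ℤ)*(y.den:ℤ)) := by rw [hkbt, ht]; ring
    rw [← h1, e1, e2, h2]
  have he1 : ((e.natAbs : ℕ) : ℚ) = (e : ℚ) := by
    rw [Nat.cast_natAbs]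
    exact_mod_cast abs_of_pos he
  have he2 : ((((x.den:ℤ) * (y.den:ℤ)).natAbs : ℕ) : ℚ) = (x.den : ℚ) * (y.den : ℚ) := by
    rw [Nat.cast_natAbs]
    push_cast
    rw [abs_of_pos]
    positivity
  have keyQ : (Int.gcd (a * (y.den:ℤ)) (b * (x.den:ℤ)) : ℚ) * e
      = (Int.gcd j k : ℚ) * ((x.den : ℚ) * (y.den : ℚ)) := by
    have := congrArg (fun n : ℕ => (n : ℚ)) key
    simp only [Nat.cast_mul] at this
    rw [he1, he2] at this
    exact this
  rw [ratGcd]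
  rw [div_eq_div_iff (by positivity) (by positivity : (e:ℚ) ≠ 0)]
  exact keyQ

lemma ratGcd_smul_int (q : ℚ) (hq : 0 < q) (a b : ℤ) :
    ratGcd (q * a) (q * b) = q * Int.gcd a b := by
  have hden : (0:ℤ) < (q.den : ℤ) := by exact_mod_cast q.pos
  have hnum : (q.num : ℚ) = q * q.den := Rat.cast_mul_den q
  have h := ratGcd_eq (q * a) (q * b) (q.den : ℤ) (q.num * a) (q.num * b) hden
    (by push_cast; rw [hnum]; ring)
    (by push_cast; rw [hnum]; ring)
  rw [h, Int.gcd_mul_left]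
  have hnn : ((q.num.natAbs : ℕ) : ℚ) = (q.num : ℚ) := by
    rw [Nat.cast_natAbs]
    exact_mod_cast abs_of_pos (Rat.num_pos.mpr hq)
  push_cast
  rw [hnn]
  rw [div_eq_iff (by exact_mod_cast q.den_nz), hnum]
  push_cast
  ring

lemma gcd_mulVec_eq (C : Matrix (Fin 2) (Fin 2) ℤ) (u : Fin 2 → ℤ)
    (hu : ¬(u 0 = 0 ∧ u 1 = 0))
    (h : ∀ p : ℕ, p.Prime → (p:ℤ) ∣ C.det →
      ¬((p:ℤ) ∣ C.mulVec u 0 ∧ (p:ℤ) ∣ C.mulVec u 1)) :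
    Int.gcd (C.mulVec u 0) (C.mulVec u 1) = Int.gcd (u 0) (u 1) := by
  set g : ℕ := Int.gcd (u 0) (u 1) with hg
  set G : ℕ := Int.gcd (C.mulVec u 0) (C.mulVec u 1) with hG
  have hgpos : 0 < g := by
    rw [hg, Int.gcd_pos_iff]
    by_contra hc
    push_neg at hc
    exact hu ⟨by tauto, by tauto⟩
  -- g ∣ G
  have hgG : (g:ℤ) ∣ (G:ℤ) := by
    have d0 : (g:ℤ) ∣ C.mulVec u 0 := by
      rw [mulVec_two]
      exact dvd_add (Dvd.dvd.mul_left (Int.gcd_dvd_left ..) _)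
        (Dvd.dvd.mul_left (Int.gcd_dvd_right ..) _)
    have d1 : (g:ℤ) ∣ C.mulVec u 1 := by
      rw [mulVec_two]
      exact dvd_add (Dvd.dvd.mul_left (Int.gcd_dvd_left ..) _)
        (Dvd.dvd.mul_left (Int.gcd_dvd_right ..) _)
    exact Int.dvd_coe_gcd d0 d1
  -- G ∣ detC * u i
  have hGdet : ∀ i : Fin 2, (G:ℤ) ∣ C.det * u i := by
    intro i
    have hadj : (C.adjugate * C).mulVec u = C.det • u := by
      rw [Matrix.adjugate_mul]
      ext i
      simp [Matrix.smul_mulVec, Matrix.one_mulVec]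
    have : C.adjugate.mulVec (C.mulVec u) i = C.det * u i := by
      rw [Matrix.mulVec_mulVec, hadj]
      simp
    rw [← this, mulVec_two]
    exact dvd_add (Dvd.dvd.mul_left (Int.gcd_dvd_left ..) _)
      (Dvd.dvd.mul_left (Int.gcd_dvd_right ..) _)
  have hGdg : (G:ℤ) ∣ (C.det.natAbs * g : ℕ) := by
    have := Int.dvd_coe_gcd (hGdet 0) (hGdet 1)
    rwa [Int.gcd_mul_left, Nat.cast_mul] at this
  have hGdgN : G ∣ C.det.natAbs * g := by exact_mod_cast hGdg
  obtain ⟨h', hh'⟩ : g ∣ G := by exact_mod_cast hgG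
  have hhdet : h' ∣ C.det.natAbs := by
    rw [hh'] at hGdgN
    have : g * h' ∣ g * C.det.natAbs := by rwa [mul_comm (C.det.natAbs)] at hGdgN
    exact (mul_dvd_mul_iff_left hgpos.ne').mp this
  have hone : h' = 1 := by
    by_contra hne
    obtain ⟨p, hp, hpd⟩ := Nat.exists_prime_and_dvd hne
    have hpdet : (p:ℤ) ∣ C.det := by
      have : p ∣ C.det.natAbs := hpd.trans hhdet
      exact dvd_trans (by exact_mod_cast this : (p:ℤ) ∣ (C.det.natAbs:ℤ))
        (Int.natAbs_dvd.mpr dvd_rfl)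
    refine h p hp hpdet ⟨?_, ?_⟩
    · have : (p:ℤ) ∣ (G:ℤ) := by
        have : p ∣ G := hh' ▸ Dvd.dvd.mul_left hpd g
        exact_mod_cast this
      exact this.trans (Int.gcd_dvd_left ..)
    · have : (p:ℤ) ∣ (G:ℤ) := by
        have : p ∣ G := hh' ▸ Dvd.dvd.mul_left hpd g
        exact_mod_cast this
      exact this.trans (Int.gcd_dvd_right ..)
  rw [hh', hone, mul_one]

def Bad (p : ℕ) (C : Matrix (Fin 2) (Fin 2) ℤ) (w : Fin 2 → ℤ) : Prop :=
  (p:ℤ) ∣ C.mulVec w 0 ∧ (p:ℤ) ∣ C.mulVec w 1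

lemma bad_of_congr (p : ℕ) (C : Matrix (Fin 2) (Fin 2) ℤ) (u w : Fin 2 → ℤ)
    (hcong : ∀ i : Fin 2, (p:ℤ) ∣ (u i - w i)) (h : Bad p C u) : Bad p C w := by
  have key : ∀ i : Fin 2, (p:ℤ) ∣ C.mulVec w i := by
    intro i
    have h1 : (p:ℤ) ∣ C.mulVec u i := by
      rcases i with ⟨iv, hiv⟩
      interval_cases iv
      · exact h.1
      · exact h.2
    have h2 : (p:ℤ) ∣ (C.mulVec u i - C.mulVec w i) := by
      rw [mulVec_two, mulVec_two]
      have e : C i 0 * u 0 + C i 1 * u 1 - (C i 0 * w 0 + C i 1 * w 1)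
          = C i 0 * (u 0 - w 0) + C i 1 * (u 1 - w 1) := by ring
      rw [e]
      exact dvd_add ((hcong 0).mul_left _) ((hcong 1).mul_left _)
    have := dvd_sub h1 h2
    simpa using this
  exact ⟨key 0, key 1⟩

lemma bad_pair (p : ℕ) (C : Matrix (Fin 2) (Fin 2) ℤ) (hC : ¬ ∀ i j : Fin 2, (p:ℤ) ∣ C i j)
    (w w' : Fin 2 → ℤ)
    (hw : w = ![1,0] ∨ w = ![0,1] ∨ w = ![1,1])
    (hw' : w' = ![1,0] ∨ w' = ![0,1] ∨ w' = ![1,1])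
    (hne : w ≠ w') (h1 : Bad p C w) (h2 : Bad p C w') : False := by
  apply hC
  have key : ∀ i : Fin 2, (p:ℤ) ∣ C i 0 ∧ (p:ℤ) ∣ C i 1 := by
    intro i
    have e1 := h1.1; have e2 := h1.2; have f1 := h2.1; have f2 := h2.2
    have g1 : (p:ℤ) ∣ C.mulVec w i := by fin_cases i <;> assumption
    have g2 : (p:ℤ) ∣ C.mulVec w' i := by fin_cases i <;> assumption
    rw [mulVec_two] at g1 g2
    rcases hw with rfl | rfl | rfl <;> rcases hw' with rfl | rfl | rfl <;>
      first
        | exact absurd rfl hne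
        | (simp at g1 g2;
           refine ⟨?_, ?_⟩ <;>
           first
             | assumption
             | (have := dvd_sub g2 g1; simpa using this)
             | (have := dvd_sub g1 g2; simpa using this))
  intro i j
  fin_cases j
  · exact (key i).1
  · exact (key i).2

lemma exists_candidate (p : ℕ) (C₂ C₃ : Matrix (Fin 2) (Fin 2) ℤ)
    (h2 : ¬ ∀ i j : Fin 2, (p:ℤ) ∣ C₂ i j) (h3 : ¬ ∀ i j : Fin 2, (p:ℤ) ∣ C₃ i j) :
    ∃ w : Fin 2 → ℤ, (w = ![1,0] ∨ w = ![0,1] ∨ w = ![1,1]) ∧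
      ¬ Bad p C₂ w ∧ ¬ Bad p C₃ w := by
  by_cases b21 : Bad p C₂ ![1,0]
  · by_cases b31 : Bad p C₃ ![0,1]
    · refine ⟨![1,1], Or.inr (Or.inr rfl), ?_, ?_⟩
      · intro hb
        exact bad_pair p C₂ h2 ![1,0] ![1,1] (Or.inl rfl) (Or.inr (Or.inr rfl))
          (by simp [funext_iff, Fin.forall_fin_two]) b21 hb
      · intro hb
        exact bad_pair p C₃ h3 ![0,1] ![1,1] (Or.inr (Or.inl rfl)) (Or.inr (Or.inr rfl))
          (by simp [funext_iff, Fin.forall_fin_two]) b31 hb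
    · refine ⟨![0,1], Or.inr (Or.inl rfl), ?_, b31⟩
      intro hb
      exact bad_pair p C₂ h2 ![1,0] ![0,1] (Or.inl rfl) (Or.inr (Or.inl rfl))
        (by simp [funext_iff, Fin.forall_fin_two]) b21 hb
  · by_cases b31 : Bad p C₃ ![1,0]
    · by_cases b22 : Bad p C₂ ![0,1]
      · refine ⟨![1,1], Or.inr (Or.inr rfl), ?_, ?_⟩
        · intro hb
          exact bad_pair p C₂ h2 ![0,1] ![1,1] (Or.inr (Or.inl rfl)) (Or.inr (Or.inr rfl))
            (by simp [funext_iff, Fin.forall_fin_two]) b22 hb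
        · intro hb
          exact bad_pair p C₃ h3 ![1,0] ![1,1] (Or.inl rfl) (Or.inr (Or.inr rfl))
            (by simp [funext_iff, Fin.forall_fin_two]) b31 hb
      · refine ⟨![0,1], Or.inr (Or.inl rfl), b22, ?_⟩
        intro hb
        exact bad_pair p C₃ h3 ![1,0] ![0,1] (Or.inl rfl) (Or.inr (Or.inl rfl))
          (by simp [funext_iff, Fin.forall_fin_two]) b31 hb
    · exact ⟨![1,0], Or.inl rfl, b21, b31⟩

lemma crt_vec (S : Finset ℕ) (hS : ∀ p ∈ S, Nat.Prime p) (w : ℕ → Fin 2 → ℤ) :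
    ∃ u : Fin 2 → ℤ, ∀ p ∈ S, ∀ i : Fin 2, (p:ℤ) ∣ (u i - w p i) := by
  classical
  induction S using Finset.induction_on with
  | empty => exact ⟨0, by simp⟩
  | @insert p S hpS ih =>
    obtain ⟨u, hu⟩ := ih (fun q hq => hS q (Finset.mem_insert_of_mem hq))
    have hp : Nat.Prime p := hS p (Finset.mem_insert_self p S)
    set M : ℕ := ∏ q ∈ S, q with hM
    have hcopN : Nat.Coprime p M := by
      apply Nat.Coprime.prod_right
      intro q hqS
      exact (Nat.coprime_primes hp (hS q (Finset.mem_insert_of_mem hqS))).mpr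
        (fun h => hpS (h ▸ hqS))
    have hcop : IsCoprime (p:ℤ) (M:ℤ) := Int.isCoprime_iff_gcd_eq_one.mpr (by
      simpa [Int.gcd_natCast_natCast] using hcopN)
    obtain ⟨x, y, hxy⟩ := hcop
    refine ⟨fun i => u i + (M:ℤ) * (y * (w p i - u i)), ?_⟩
    intro q hq i
    show (q:ℤ) ∣ u i + (M:ℤ) * (y * (w p i - u i)) - w q i
    rcases Finset.mem_insert.mp hq with rfl | hqS
    · have h1 : (q:ℤ) ∣ (y * (M:ℤ) - 1) := ⟨-x, by linarith [hxy]⟩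
      have e : u i + (M:ℤ) * (y * (w q i - u i)) - w q i
          = (y * (M:ℤ) - 1) * (w q i - u i) := by ring
      rw [e]
      exact h1.mul_right _
    · have hqM : (q:ℤ) ∣ (M:ℤ) := by
        exact_mod_cast Int.natCast_dvd_natCast.mpr (Finset.dvd_prod_of_mem _ hqS)
      have e : u i + (M:ℤ) * (y * (w p i - u i)) - w q i
          = (u i - w q i) + (M:ℤ) * (y * (w p i - u i)) := by ring
      rw [e]
      exact dvd_add (hu q hqS i) (hqM.mul_right _)

lemma exists_good_u (C₂ C₃ : Matrix (Fin 2) (Fin 2) ℤ)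
    (h2 : ∀ p : ℕ, p.Prime → ¬ ∀ i j : Fin 2, (p:ℤ) ∣ C₂ i j)
    (h3 : ∀ p : ℕ, p.Prime → ¬ ∀ i j : Fin 2, (p:ℤ) ∣ C₃ i j)
    (hd2 : 2 ≤ C₂.det) (hd3 : 2 ≤ C₃.det) :
    ∃ u : Fin 2 → ℤ, ¬(u 0 = 0 ∧ u 1 = 0) ∧
      (∀ p : ℕ, p.Prime → (p:ℤ) ∣ C₂.det → ¬ Bad p C₂ u) ∧
      (∀ p : ℕ, p.Prime → (p:ℤ) ∣ C₃.det → ¬ Bad p C₃ u) := by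
  classical
  set N : ℕ := (C₂.det * C₃.det).natAbs with hN
  have hNbig : 2 ≤ N := by
    rw [hN]
    have : (4:ℤ) ≤ C₂.det * C₃.det := by nlinarith
    omega
  set S : Finset ℕ := N.primeFactors with hS
  have hSprime : ∀ p ∈ S, Nat.Prime p := fun p hp => Nat.prime_of_mem_primeFactors hp
  set w : ℕ → Fin 2 → ℤ := fun p =>
    if hp : p.Prime then Classical.choose (exists_candidate p C₂ C₃ (h2 p hp) (h3 p hp))
    else 0 with hw
  obtain ⟨u, hu⟩ := crt_vec S hSprime w
  have hwspec : ∀ p : ℕ, (hp : p.Prime) →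
      (w p = ![1,0] ∨ w p = ![0,1] ∨ w p = ![1,1]) ∧ ¬ Bad p C₂ (w p) ∧ ¬ Bad p C₃ (w p) := by
    intro p hp
    have := Classical.choose_spec (exists_candidate p C₂ C₃ (h2 p hp) (h3 p hp))
    simpa [hw, dif_pos hp] using this
  -- membership in S
  have hmem : ∀ p : ℕ, p.Prime → ((p:ℤ) ∣ C₂.det ∨ (p:ℤ) ∣ C₃.det) → p ∈ S := by
    intro p hp hdvd
    rw [hS, Nat.mem_primeFactors]
    refine ⟨hp, ?_, by omega⟩
    have : (p:ℤ) ∣ C₂.det * C₃.det := by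
      rcases hdvd with h | h
      · exact h.mul_right _
      · exact h.mul_left _
    rw [hN]
    exact Int.natAbs_dvd_natAbs.mpr (by simpa using this)
  -- nonzero
  have hSne : S.Nonempty := by
    obtain ⟨p, hp, hpd⟩ := Nat.exists_prime_and_dvd (by omega : N ≠ 1)
    exact ⟨p, Nat.mem_primeFactors.mpr ⟨hp, hpd, by omega⟩⟩
  refine ⟨u, ?_, ?_, ?_⟩
  · obtain ⟨p, hpS⟩ := hSne
    have hp := hSprime p hpS
    rintro ⟨h0, h1⟩
    obtain ⟨i, hi⟩ : ∃ i : Fin 2, w p i = 1 := by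
      rcases (hwspec p hp).1 with h | h | h <;> rw [h]
      · exact ⟨0, rfl⟩
      · exact ⟨1, rfl⟩
      · exact ⟨0, rfl⟩
    have := hu p hpS i
    rw [hi] at this
    have hui : u i = 0 := by
      rcases i with ⟨iv, hiv⟩
      interval_cases iv <;> assumption
    rw [hui] at this
    have h1 : (p:ℤ) ∣ 1 := by
      have h0 : (p:ℤ) ∣ -1 := by simpa using this
      exact (dvd_neg.mp h0)
    have h2 := Int.le_of_dvd one_pos h1
    have h3 := hp.two_le
    omega
  · intro p hp hdvd hbad
    exact (hwspec p hp).2.1 (bad_of_congr p C₂ u (w p) (hu p (hmem p hp (Or.inl hdvd))) hbad)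
  · intro p hp hdvd hbad
    exact (hwspec p hp).2.2 (bad_of_congr p C₃ u (w p) (hu p (hmem p hp (Or.inr hdvd))) hbad)

lemma primitive_part (Q : Matrix (Fin 2) (Fin 2) ℚ) (hQ : Q ≠ 0) :
    ∃ (C : Matrix (Fin 2) (Fin 2) ℤ) (q : ℚ), 0 < q ∧ Q = q • C.map (Int.cast : ℤ → ℚ) ∧
      ∀ p : ℕ, p.Prime → ¬ ∀ i j : Fin 2, (p:ℤ) ∣ C i j := by
  classical
  set m : ℤ := ∏ ij : Fin 2 × Fin 2, ((Q ij.1 ij.2).den : ℤ) with hm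
  have hmpos : 0 < m := by
    rw [hm]
    apply Finset.prod_pos
    intro ij _
    exact_mod_cast (Q ij.1 ij.2).pos
  have hden : ∀ i j : Fin 2, ((Q i j).den : ℤ) ∣ m := by
    intro i j
    rw [hm]
    exact Finset.dvd_prod_of_mem (fun ij => ((Q ij.1 ij.2).den : ℤ))
      (Finset.mem_univ (i, j))
  set M : Matrix (Fin 2) (Fin 2) ℤ :=
    Matrix.of (fun i j => (Q i j).num * (m / ((Q i j).den : ℤ))) with hM
  have hMcast : ∀ i j : Fin 2, ((M i j : ℤ) : ℚ) = Q i j * m := by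
    intro i j
    obtain ⟨c, hc⟩ := hden i j
    have hdne : ((Q i j).den : ℤ) ≠ 0 := by exact_mod_cast (Q i j).den_nz
    have hdiv : m / ((Q i j).den : ℤ) = c := by
      rw [hc]; exact Int.mul_ediv_cancel_left c hdne
    have : M i j = (Q i j).num * c := by rw [hM]; simp [hdiv]
    rw [this]
    push_cast
    rw [Rat.cast_mul_den (Q i j), hc]
    push_cast
    ring
  have hMne : ∃ i j : Fin 2, M i j ≠ 0 := by
    have : ∃ i j : Fin 2, Q i j ≠ 0 := by
      by_contra hc
      push_neg at hc
      apply hQ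
      ext i j
      simpa using hc i j
    obtain ⟨i, j, hij⟩ := this
    refine ⟨i, j, ?_⟩
    intro h0
    apply hij
    have := hMcast i j
    rw [h0] at this
    have hmne : (m:ℚ) ≠ 0 := by positivity
    field_simp at this
    exact (mul_eq_zero.mp (by exact_mod_cast this.symm : Q i j * (m:ℚ) = 0)).resolve_right hmne
  set g : ℕ := Int.gcd (Int.gcd (M 0 0) (M 0 1)) (Int.gcd (M 1 0) (M 1 1)) with hg
  have hgdvd : ∀ i j : Fin 2, (g:ℤ) ∣ M i j := by
    intro i j
    fin_cases i <;> fin_cases j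
    · exact dvd_trans ((Int.gcd_dvd_left ..)) ((Int.gcd_dvd_left ..))
    · exact dvd_trans ((Int.gcd_dvd_left ..)) ((Int.gcd_dvd_right ..))
    · exact dvd_trans ((Int.gcd_dvd_right ..)) ((Int.gcd_dvd_left ..))
    · exact dvd_trans ((Int.gcd_dvd_right ..)) ((Int.gcd_dvd_right ..))
  have hgpos : 0 < g := by
    obtain ⟨i, j, hij⟩ := hMne
    rcases Nat.eq_zero_or_pos g with h0 | h
    · exfalso
      apply hij
      have := hgdvd i j
      rw [h0] at this
      simpa using this
    · exact h
  set C : Matrix (Fin 2) (Fin 2) ℤ := Matrix.of (fun i j => M i j / (g:ℤ)) with hC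
  have hCg : ∀ i j : Fin 2, M i j = (g:ℤ) * C i j := by
    intro i j
    rw [hC]
    simp only [Matrix.of_apply]
    exact (Int.mul_ediv_cancel' (hgdvd i j)).symm
  refine ⟨C, (g:ℚ)/(m:ℚ), by positivity, ?_, ?_⟩
  · ext i j
    have h1 := hMcast i j
    rw [hCg i j] at h1
    push_cast at h1
    have hmne : (m:ℚ) ≠ 0 := by positivity
    simp only [Matrix.smul_apply, Matrix.map_apply, smul_eq_mul]
    field_simp
    push_cast
    linarith [h1]
  · intro p hp hall
    have hdvd : ∀ i j : Fin 2, ((p:ℤ) * g) ∣ M i j := by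
      intro i j
      rw [hCg i j]
      obtain ⟨e, he⟩ := hall i j
      exact ⟨e, by rw [he]; ring⟩
    have : ((p:ℤ) * g) ∣ (g:ℤ) := by
      rw [hg]
      push_cast
      exact Int.dvd_coe_gcd (Int.dvd_coe_gcd (hdvd 0 0) (hdvd 0 1)) (Int.dvd_coe_gcd (hdvd 1 0) (hdvd 1 1))
    have hle := Int.le_of_dvd (by exact_mod_cast hgpos) this
    have hp2 := hp.two_le
    nlinarith [hgpos, hp2, hle]

lemma pair_data (A₁ Aj : Matrix (Fin 2) (Fin 2) ℚ) (h1 : 0 < A₁.det) (hj : 0 < Aj.det)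
    (hne : ¬ MatEquiv A₁ Aj) :
    ∃ (C : Matrix (Fin 2) (Fin 2) ℤ) (q : ℚ), 0 < q ∧
      Aj * A₁.adjugate = q • C.map (Int.cast : ℤ → ℚ) ∧
      (∀ p : ℕ, p.Prime → ¬ ∀ i j : Fin 2, (p:ℤ) ∣ C i j) ∧
      2 ≤ C.det ∧ (C.det : ℚ) * q^2 = A₁.det * Aj.det := by
  set Q : Matrix (Fin 2) (Fin 2) ℚ := Aj * A₁.adjugate with hQdef
  have hQdet : Q.det = Aj.det * A₁.det := by
    rw [hQdef, Matrix.det_mul, Matrix.det_adjugate]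
    norm_num
  have hQne : Q ≠ 0 := by
    intro h
    rw [h] at hQdet
    simp only [Matrix.det_zero] at hQdet
    nlinarith
  obtain ⟨C, q, hq, hQeq, hcontent⟩ := primitive_part Q hQne
  have hmapdet : (C.map (Int.cast : ℤ → ℚ)).det = (C.det : ℚ) := by
    have := (RingHom.map_det (Int.castRingHom ℚ) C).symm
    simpa using this
  have hdetrel : (C.det : ℚ) * q^2 = A₁.det * Aj.det := by
    have : Q.det = q ^ 2 * (C.det : ℚ) := by
      rw [hQeq, Matrix.det_smul, hmapdet]
      norm_num
    rw [hQdet] at this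
    linarith [this]
  have hCpos : 0 < C.det := by
    have : (0:ℚ) < (C.det : ℚ) := by
      have hq2 : (0:ℚ) < q^2 := by positivity
      nlinarith
    exact_mod_cast this
  have hCne1 : C.det ≠ 1 := by
    intro hdet1
    apply hne
    refine ⟨C, q / A₁.det, hdet1, div_ne_zero hq.ne' h1.ne', ?_⟩
    have e : A₁.det • Aj = q • (C.map (Int.cast : ℤ → ℚ) * A₁) := by
      have e1 : Aj * A₁.adjugate * A₁ = (q • C.map (Int.cast : ℤ → ℚ)) * A₁ := by
        rw [← hQeq, hQdef]
      rw [Matrix.mul_assoc, Matrix.adjugate_mul, Matrix.smul_mul] at e1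
      rw [← e1]
      rw [Matrix.mul_smul, Matrix.mul_one]
    ext i j
    have := congrFun (congrFun (congrArg (fun M => M) e) i) j
    simp only [Matrix.smul_apply, smul_eq_mul] at this ⊢
    field_simp
    linarith [this]
  refine ⟨C, q, hq, hQeq, hcontent, by omega, hdetrel⟩

/-- For pairwise non-equivalent `A₁, A₂, A₃ ∈ GL₂⁺(ℚ)` there is `B ∈ GL₂⁺(ℚ)` such that among
`nlc(A₁B), nlc(A₂B), nlc(A₃B)` one is strictly bigger than the two others. -/
theorem nlc_separates_three (A₁ A₂ A₃ : Matrix (Fin 2) (Fin 2) ℚ)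
    (h₁ : 0 < A₁.det) (h₂ : 0 < A₂.det) (h₃ : 0 < A₃.det)
    (h₁₂ : ¬ MatEquiv A₁ A₂) (h₁₃ : ¬ MatEquiv A₁ A₃) (h₂₃ : ¬ MatEquiv A₂ A₃) :
    ∃ B : Matrix (Fin 2) (Fin 2) ℚ, 0 < B.det ∧
      ((nlc (A₂ * B) < nlc (A₁ * B) ∧ nlc (A₃ * B) < nlc (A₁ * B)) ∨
       (nlc (A₁ * B) < nlc (A₂ * B) ∧ nlc (A₃ * B) < nlc (A₂ * B)) ∨
       (nlc (A₁ * B) < nlc (A₃ * B) ∧ nlc (A₂ * B) < nlc (A₃ * B))) := by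
  obtain ⟨C₂, q₂, hq₂, hQeq₂, hcont₂, hCd₂, hrel₂⟩ := pair_data A₁ A₂ h₁ h₂ h₁₂
  obtain ⟨C₃, q₃, hq₃, hQeq₃, hcont₃, hCd₃, hrel₃⟩ := pair_data A₁ A₃ h₁ h₃ h₁₃
  obtain ⟨u, hune, hgood₂, hgood₃⟩ := exists_good_u C₂ C₃ hcont₂ hcont₃ hCd₂ hCd₃
  -- gcd preservation
  have hgcd₂ : Int.gcd (C₂.mulVec u 0) (C₂.mulVec u 1) = Int.gcd (u 0) (u 1) :=
    gcd_mulVec_eq C₂ u hune (fun p hp hd => hgood₂ p hp hd)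
  have hgcd₃ : Int.gcd (C₃.mulVec u 0) (C₃.mulVec u 1) = Int.gcd (u 0) (u 1) :=
    gcd_mulVec_eq C₃ u hune (fun p hp hd => hgood₃ p hp hd)
  set γ : ℚ := (Int.gcd (u 0) (u 1) : ℚ) with hγ
  have hγpos : 0 < γ := by
    rw [hγ]
    have : Int.gcd (u 0) (u 1) ≠ 0 := fun h => hune (Int.gcd_eq_zero_iff.mp h)
    exact_mod_cast Nat.pos_of_ne_zero this
  set uc : Fin 2 → ℚ := fun i => ((u i : ℤ) : ℚ) with huc
  set v : Fin 2 → ℚ := A₁.adjugate.mulVec uc with hv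
  -- A₁ ⬝ v
  have hA1v : ∀ i : Fin 2, A₁.mulVec v i = A₁.det * uc i := by
    intro i
    rw [hv, Matrix.mulVec_mulVec, Matrix.mul_adjugate, Matrix.smul_mulVec,
      Matrix.one_mulVec]
    simp
  have hAjv : ∀ (Aj : Matrix (Fin 2) (Fin 2) ℚ) (C : Matrix (Fin 2) (Fin 2) ℤ) (q : ℚ),
      Aj * A₁.adjugate = q • C.map (Int.cast : ℤ → ℚ) →
      ∀ i : Fin 2, Aj.mulVec v i = q * ((C.mulVec u i : ℤ) : ℚ) := by
    intro Aj C q hQeq i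
    rw [hv, Matrix.mulVec_mulVec, hQeq, Matrix.smul_mulVec]
    have : (C.map (Int.cast : ℤ → ℚ)).mulVec uc i = ((C.mulVec u i : ℤ) : ℚ) := by
      rw [mulVec_two, mulVec_two]
      simp only [Matrix.map_apply, huc]
      push_cast
      ring
    rw [Pi.smul_apply, this, smul_eq_mul]
  -- the B matrix
  have hvne : ¬ (v 0 = 0 ∧ v 1 = 0) := by
    rintro ⟨hv0, hv1⟩
    have h0 := hA1v 0
    have h1 := hA1v 1
    rw [mulVec_two] at h0 h1
    rw [hv0, hv1] at h0 h1
    simp only [mul_zero, add_zero, zero_add, zero_mul] at h0 h1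
    have hu0 : uc 0 = 0 := by
      have := h0.symm
      rcases mul_eq_zero.mp (by linarith [h0] : A₁.det * uc 0 = 0) with h | h
      · exact absurd h h₁.ne'
      · exact h
    have hu1 : uc 1 = 0 := by
      rcases mul_eq_zero.mp (by linarith [h1] : A₁.det * uc 1 = 0) with h | h
      · exact absurd h h₁.ne'
      · exact h
    apply hune
    have hu0' : ((u 0 : ℤ) : ℚ) = 0 := by rw [huc] at hu0; simpa using hu0
    have hu1' : ((u 1 : ℤ) : ℚ) = 0 := by rw [huc] at hu1; simpa using hu1
    exact ⟨by exact_mod_cast hu0', by exact_mod_cast hu1'⟩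
  set s : ℚ := v 0 ^ 2 + v 1 ^ 2 with hs
  have hspos : 0 < s := by
    rcases not_and_or.mp hvne with h | h
    · have : 0 < v 0 ^ 2 := by positivity
      nlinarith [sq_nonneg (v 1)]
    · have : 0 < v 1 ^ 2 := by positivity
      nlinarith [sq_nonneg (v 0)]
  set Bm : Matrix (Fin 2) (Fin 2) ℚ := Matrix.of ![![v 0, -(v 1)/s], ![v 1, (v 0)/s]] with hBm
  have hdetB : Bm.det = 1 := by
    rw [hBm, Matrix.det_fin_two_of]
    field_simp
    ring
  have hcol : ∀ (A : Matrix (Fin 2) (Fin 2) ℚ) (i : Fin 2), (A * Bm) i 0 = A.mulVec v i := by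
    intro A i
    rw [Matrix.mul_apply, mulVec_two, Fin.sum_univ_two, hBm]
    simp
  have hnlc : ∀ (A : Matrix (Fin 2) (Fin 2) ℚ),
      nlc (A * Bm) = ratGcd (A.mulVec v 0) (A.mulVec v 1) ^ 2 / A.det := by
    intro A
    rw [nlc, hcol, hcol, Matrix.det_mul, hdetB, mul_one]
  -- compute the three values
  have hval₁ : nlc (A₁ * Bm) = A₁.det * γ ^ 2 := by
    rw [hnlc, hA1v 0, hA1v 1]
    have : ratGcd (A₁.det * uc 0) (A₁.det * uc 1) = A₁.det * γ := by
      rw [huc]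
      rw [ratGcd_smul_int A₁.det h₁ (u 0) (u 1)]
    rw [this]
    field_simp
  have hval : ∀ (Aj : Matrix (Fin 2) (Fin 2) ℚ) (C : Matrix (Fin 2) (Fin 2) ℤ) (q : ℚ),
      0 < q → Aj * A₁.adjugate = q • C.map (Int.cast : ℤ → ℚ) →
      Int.gcd (C.mulVec u 0) (C.mulVec u 1) = Int.gcd (u 0) (u 1) →
      nlc (Aj * Bm) = q ^ 2 * γ ^ 2 / Aj.det := by
    intro Aj C q hqpos hQeq hgcd
    rw [hnlc, hAjv Aj C q hQeq 0, hAjv Aj C q hQeq 1]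
    rw [ratGcd_smul_int q hqpos]
    rw [hgcd, ← hγ]
    ring_nf
  have hval₂ := hval A₂ C₂ q₂ hq₂ hQeq₂ hgcd₂
  have hval₃ := hval A₃ C₃ q₃ hq₃ hQeq₃ hgcd₃
  refine ⟨Bm, by rw [hdetB]; norm_num, Or.inl ⟨?_, ?_⟩⟩
  · rw [hval₁, hval₂]
    rw [div_lt_iff₀ h₂]
    have h2 : (2:ℚ) ≤ (C₂.det : ℚ) := by exact_mod_cast hCd₂
    have hpos : 0 < q₂ ^ 2 * γ ^ 2 := mul_pos (pow_pos hq₂ 2) (pow_pos hγpos 2)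
    calc q₂ ^ 2 * γ ^ 2 < 2 * (q₂ ^ 2 * γ ^ 2) := by linarith
      _ ≤ (C₂.det : ℚ) * (q₂ ^ 2 * γ ^ 2) := by nlinarith
      _ = A₁.det * γ ^ 2 * A₂.det := by rw [show (C₂.det : ℚ) * (q₂ ^ 2 * γ ^ 2) = ((C₂.det : ℚ) * q₂ ^ 2) * γ ^ 2 by ring, hrel₂]; ring
  · rw [hval₁, hval₃]
    rw [div_lt_iff₀ h₃]
    have h2 : (2:ℚ) ≤ (C₃.det : ℚ) := by exact_mod_cast hCd₃
    have hpos : 0 < q₃ ^ 2 * γ ^ 2 := mul_pos (pow_pos hq₃ 2) (pow_pos hγpos 2)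
    calc q₃ ^ 2 * γ ^ 2 < 2 * (q₃ ^ 2 * γ ^ 2) := by linarith
      _ ≤ (C₃.det : ℚ) * (q₃ ^ 2 * γ ^ 2) := by nlinarith
      _ = A₁.det * γ ^ 2 * A₃.det := by rw [show (C₃.det : ℚ) * (q₃ ^ 2 * γ ^ 2) = ((C₃.det : ℚ) * q₃ ^ 2) * γ ^ 2 by ring, hrel₃]; ring
end

section
/- For the matrices A₁ = [[1,0],[0,1]], A₂ = [[1,1/2],[0,1]], A₃ = [[4,0],[0,1]] in GL₂⁺(ℚ), for every B ∈ GL₂⁺(ℚ), at least two of the three values nlc(A₁B), nlc(A₂B), nlc(A₃B) are equal. -/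
theorem gadd (a b : ℤ) : Int.gcd (a+b) b = Int.gcd a b := by
  apply Nat.dvd_antisymm
  · rw [← Int.natCast_dvd_natCast]
    push_cast
    refine Int.dvd_coe_gcd ?_ (Int.gcd_dvd_right _ _)
    simpa using (Int.gcd_dvd_left (a := a+b) (b := b)).sub (Int.gcd_dvd_right _ _)
  · rw [← Int.natCast_dvd_natCast]
    push_cast
    exact Int.dvd_coe_gcd ((Int.gcd_dvd_left _ _).add (Int.gcd_dvd_right _ _)) (Int.gcd_dvd_right _ _)

theorem g2l (a b : ℤ) (hb : Odd b) : Int.gcd (2*a) b = Int.gcd a b := by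
  have h2 : Nat.Coprime 2 b.natAbs := hb.natAbs.coprime_two_left
  rw [Int.gcd, Int.gcd, Int.natAbs_mul]
  exact h2.gcd_mul_left_cancel _

theorem g2r (a b : ℤ) (ha : Odd a) : Int.gcd a (2*b) = Int.gcd a b := by
  have h2 : Nat.Coprime 2 a.natAbs := ha.natAbs.coprime_two_left
  rw [Int.gcd, Int.gcd, Int.natAbs_mul]
  exact Nat.Coprime.gcd_mul_left_cancel_right _ h2

theorem g22 (a b : ℤ) : Int.gcd (2*a) (2*b) = 2 * Int.gcd a b := by
  simpa using Int.gcd_mul_left 2 a b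

theorem keyAux : ∀ n : ℕ, ∀ M K : ℤ, K.natAbs = n →
    2 * Int.gcd M K = Int.gcd (2*M+K) (2*K) ∨
    2 * Int.gcd M K = Int.gcd (4*M) K ∨
    Int.gcd (2*M+K) (2*K) = Int.gcd (4*M) K := by
  intro n
  induction n using Nat.strong_induction_on with
  | _ n ih =>
    intro M K hK
    rcases Int.even_or_odd K with hKe | hKo
    · -- K even
      obtain ⟨K0, hK0'⟩ := hKe
      obtain ⟨K', rfl⟩ : ∃ K', K = 2 * K' := ⟨K0, by omega⟩
      rcases Int.even_or_odd M with hMe | hMo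
      · -- M even too
        by_cases hK0 : K' = 0
        · subst hK0
          left
          simp [Int.gcd]
          omega
        · obtain ⟨M0, hM0'⟩ := hMe
          obtain ⟨M', rfl⟩ : ∃ M', M = 2 * M' := ⟨M0, by omega⟩
          have hlt : K'.natAbs < n := by omega
          have h1 : Int.gcd (2*M') (2*K') = 2 * Int.gcd M' K' := g22 ..
          have h2 : Int.gcd (2*(2*M')+2*K') (2*(2*K')) = 2 * Int.gcd (2*M'+K') (2*K') := by
            rw [show 2*(2*M')+2*K' = 2*(2*M'+K') by ring]; exact g22 ..
          have h3 : Int.gcd (4*(2*M')) (2*K') = 2 * Int.gcd (4*M') K' := by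
            rw [show 4*(2*M') = 2*(4*M') by ring]; exact g22 ..
          rcases ih K'.natAbs hlt M' K' rfl with h | h | h
          · left; omega
          · right; left; omega
          · right; right; omega
      · -- M odd
        rcases Int.even_or_odd K' with hK'e | hK'o
        · -- K' even: first disjunct
          left
          have hodd : Odd (M + K') := by
            obtain ⟨t, ht⟩ := hMo; obtain ⟨s, hs⟩ := hK'e; exact ⟨t + s, by omega⟩
          have h1 : Int.gcd (2*M+2*K') (2*(2*K')) = 2 * Int.gcd (M+K') (2*K') := by
            rw [show 2*M+2*K' = 2*(M+K') by ring]; exact g22 ..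
          have h2 : Int.gcd (M+K') (2*K') = Int.gcd (M+K') K' := g2r _ _ hodd
          have h3 : Int.gcd (M+K') K' = Int.gcd M K' := gadd ..
          have h4 : Int.gcd M (2*K') = Int.gcd M K' := g2r _ _ hMo
          omega
        · -- K' odd: second disjunct
          right; left
          have h1 : Int.gcd (4*M) (2*K') = 2 * Int.gcd (2*M) K' := by
            rw [show (4:ℤ)*M = 2*(2*M) by ring]; exact g22 ..
          have h2 : Int.gcd (2*M) K' = Int.gcd M K' := g2l _ _ hK'o
          have h3 : Int.gcd M (2*K') = Int.gcd M K' := g2r _ _ hMo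
          omega
    · -- K odd: third disjunct
      right; right
      have hodd : Odd (2*M+K) := by obtain ⟨t, ht⟩ := hKo; exact ⟨M+t, by omega⟩
      have h1 : Int.gcd (2*M+K) (2*K) = Int.gcd (2*M+K) K := g2r _ _ hodd
      have h2 : Int.gcd (2*M+K) K = Int.gcd (2*M) K := gadd ..
      have h3 : Int.gcd (2*M) K = Int.gcd M K := g2l _ _ hKo
      have h4 : Int.gcd (4*M) K = Int.gcd (2*M) K := by
        rw [show (4:ℤ)*M = 2*(2*M) by ring]; exact g2l _ _ hKo
      omega

theorem key (M K : ℤ) :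
    2 * Int.gcd M K = Int.gcd (2*M+K) (2*K) ∨
    2 * Int.gcd M K = Int.gcd (4*M) K ∨
    Int.gcd (2*M+K) (2*K) = Int.gcd (4*M) K := keyAux K.natAbs M K rfl

theorem num_mul_eq (m n : ℤ) (hn : (n:ℚ) ≠ 0) : ((m:ℚ)/n).num * n = m * (((m:ℚ)/n).den : ℤ) := by
  set a : ℚ := (m:ℚ)/n with ha
  have hd : ((a.den : ℚ)) ≠ 0 := by exact_mod_cast a.den_nz
  have h2 : (a.num : ℚ) / (a.den : ℚ) = (m:ℚ)/n := by rw [Rat.num_div_den]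
  rw [div_eq_div_iff hd hn] at h2
  exact_mod_cast h2

theorem ratGcd_div (m k n : ℤ) (hn : 0 < n) :
    ratGcd ((m:ℚ)/(n:ℚ)) ((k:ℚ)/(n:ℚ)) = (Int.gcd m k : ℚ) / (n:ℚ) := by
  have hn0 : (n:ℚ) ≠ 0 := by positivity
  set a : ℚ := (m:ℚ)/n with ha
  set b : ℚ := (k:ℚ)/n with hb
  have h1 : a.num * n = m * (a.den : ℤ) := num_mul_eq m n hn0
  have h2 : b.num * n = k * (b.den : ℤ) := num_mul_eq k n hn0
  have e1 : n * (a.num * (b.den:ℤ)) = ((a.den:ℤ) * (b.den:ℤ)) * m := by linear_combination (b.den:ℤ) * h1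
  have e2 : n * (b.num * (a.den:ℤ)) = ((a.den:ℤ) * (b.den:ℤ)) * k := by linear_combination (a.den:ℤ) * h2
  have hnat : n.natAbs * Int.gcd (a.num * (b.den:ℤ)) (b.num * (a.den:ℤ))
      = ((a.den:ℤ) * (b.den:ℤ)).natAbs * Int.gcd m k := by
    rw [← Int.gcd_mul_left, e1, e2, Int.gcd_mul_left]
  have hdd : (0:ℤ) < (a.den:ℤ) * (b.den:ℤ) := by positivity
  rw [ratGcd]
  rw [div_eq_div_iff (by positivity) hn0]
  have hZ : n * (Int.gcd (a.num * (b.den:ℤ)) (b.num * (a.den:ℤ)) : ℤ)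
      = ((a.den:ℤ)*(b.den:ℤ)) * (Int.gcd m k : ℤ) := by
    rw [← Int.natAbs_of_nonneg hn.le, ← Int.natAbs_of_nonneg hdd.le]
    exact_mod_cast hnat
  have hQ : (n:ℚ) * (Int.gcd (a.num * (b.den:ℤ)) (b.num * (a.den:ℤ)) : ℚ)
      = (((a.den:ℤ):ℚ)*((b.den:ℤ):ℚ)) * (Int.gcd m k : ℚ) := by exact_mod_cast hZ
  push_cast at hQ ⊢
  linarith [hQ]

theorem num_div_den' (a : ℚ) (t : ℤ) (ht : 0 < t) : a = ((a.num * t : ℤ) : ℚ) / (((a.den : ℤ) * t : ℤ) : ℚ) := by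
  have hd : ((a.den : ℚ)) ≠ 0 := by exact_mod_cast a.den_nz
  have ht' : ((t:ℚ)) ≠ 0 := by positivity
  push_cast
  rw [mul_div_mul_right _ _ ht', Rat.num_div_den]

/-- For `A₁ = [[1,0],[0,1]]`, `A₂ = [[1,1/2],[0,1]]`, `A₃ = [[4,0],[0,1]]`, for every
`B ∈ GL₂⁺(ℚ)` at least two of `nlc(A₁B), nlc(A₂B), nlc(A₃B)` are equal. -/
theorem nlc_counterexample (B : Matrix (Fin 2) (Fin 2) ℚ) (hB : 0 < B.det) :
    nlc (!![1, 0; 0, 1] * B) = nlc (!![1, 1/2; 0, 1] * B) ∨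
    nlc (!![1, 0; 0, 1] * B) = nlc (!![4, 0; 0, 1] * B) ∨
    nlc (!![1, 1/2; 0, 1] * B) = nlc (!![4, 0; 0, 1] * B) := by
  set a : ℚ := B 0 0 with ha
  set c : ℚ := B 1 0 with hc
  -- entries
  have e10 : (!![1, 0; 0, 1] * B : Matrix (Fin 2) (Fin 2) ℚ) 0 0 = a := by
    simp [Matrix.mul_apply, Fin.sum_univ_two]; rfl
  have e11 : (!![1, 0; 0, 1] * B : Matrix (Fin 2) (Fin 2) ℚ) 1 0 = c := by
    simp [Matrix.mul_apply, Fin.sum_univ_two]; rfl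
  have e20 : (!![1, 1/2; 0, 1] * B : Matrix (Fin 2) (Fin 2) ℚ) 0 0 = a + (1/2) * c := by
    simp [Matrix.mul_apply, Fin.sum_univ_two]; rfl
  have e21 : (!![1, 1/2; 0, 1] * B : Matrix (Fin 2) (Fin 2) ℚ) 1 0 = c := by
    simp [Matrix.mul_apply, Fin.sum_univ_two]; rfl
  have e30 : (!![4, 0; 0, 1] * B : Matrix (Fin 2) (Fin 2) ℚ) 0 0 = 4 * a := by
    simp [Matrix.mul_apply, Fin.sum_univ_two]; rfl
  have e31 : (!![4, 0; 0, 1] * B : Matrix (Fin 2) (Fin 2) ℚ) 1 0 = c := by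
    simp [Matrix.mul_apply, Fin.sum_univ_two]; rfl
  have d1 : (!![1, 0; 0, 1] * B : Matrix (Fin 2) (Fin 2) ℚ).det = B.det := by
    rw [Matrix.det_mul]; simp [Matrix.det_fin_two_of]
  have d2 : (!![1, 1/2; 0, 1] * B : Matrix (Fin 2) (Fin 2) ℚ).det = B.det := by
    rw [Matrix.det_mul]; simp [Matrix.det_fin_two_of]
  have d3 : (!![4, 0; 0, 1] * B : Matrix (Fin 2) (Fin 2) ℚ).det = 4 * B.det := by
    rw [Matrix.det_mul]; norm_num [Matrix.det_fin_two_of]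
  -- common denominator
  set n : ℤ := 2 * ((a.den : ℤ) * (c.den : ℤ)) with hn
  have hnpos : 0 < n := by positivity
  set M : ℤ := a.num * (2 * (c.den : ℤ)) with hM
  set K : ℤ := c.num * (2 * (a.den : ℤ)) with hK
  have haM : a = (M : ℚ) / (n : ℚ) := by
    rw [hM, hn, show (2:ℤ) * ((a.den:ℤ) * (c.den:ℤ)) = (a.den:ℤ) * (2 * (c.den:ℤ)) by ring]
    exact num_div_den' a _ (by positivity)
  have hcK : c = (K : ℚ) / (n : ℚ) := by
    rw [hK, hn, show (2:ℤ) * ((a.den:ℤ) * (c.den:ℤ)) = (c.den:ℤ) * (2 * (a.den:ℤ)) by ring]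
    exact num_div_den' c _ (by positivity)
  have hn0 : (n:ℚ) ≠ 0 := by positivity
  have g1 : ratGcd a c = (Int.gcd M K : ℚ) / (n:ℚ) := by
    rw [haM, hcK]; exact ratGcd_div M K n hnpos
  have g2 : ratGcd (a + (1/2) * c) c = (Int.gcd (2*M+K) (2*K) : ℚ) / ((2*n : ℤ) : ℚ) := by
    have h1 : a + (1/2) * c = ((2*M+K : ℤ) : ℚ) / ((2*n : ℤ) : ℚ) := by
      rw [haM, hcK]; push_cast; field_simp
    have h2 : c = ((2*K : ℤ) : ℚ) / ((2*n : ℤ) : ℚ) := by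
      rw [hcK]; push_cast; field_simp
    rw [h1, h2]; exact ratGcd_div _ _ _ (by positivity)
  have g3 : ratGcd (4 * a) c = (Int.gcd (4*M) K : ℚ) / (n:ℚ) := by
    have h1 : 4 * a = ((4*M : ℤ) : ℚ) / (n : ℚ) := by rw [haM]; push_cast; ring
    rw [h1, hcK]; exact ratGcd_div _ _ _ hnpos
  have hD : B.det ≠ 0 := ne_of_gt hB
  rw [nlc, nlc, nlc, e10, e11, e20, e21, e30, e31, d1, d2, d3, g1, g2, g3]
  rcases key M K with h | h | h
  · left
    have hq : (Int.gcd (2*M+K) (2*K) : ℚ) = 2 * (Int.gcd M K : ℚ) := by exact_mod_cast h.symm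
    rw [hq]; push_cast; field_simp
  · right; left
    have hq : (Int.gcd (4*M) K : ℚ) = 2 * (Int.gcd M K : ℚ) := by exact_mod_cast h.symm
    rw [hq]; push_cast; field_simp; ring
  · right; right
    have hq : (Int.gcd (2*M+K) (2*K) : ℚ) = (Int.gcd (4*M) K : ℚ) := by exact_mod_cast h
    rw [hq]; push_cast; ring
end
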